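/- arXiv:0801.0313 — 4 statements merged into one kernel-verified Lean document; each statement's English description precedes it below -/
import Mathlib

section
/- Let Ω be a locally compact Hausdorff space and let (P_n) be a pseudo-finite sequence of prime ideals in C_0(Ω). Then ⋃_n P_n is a prime ideal in C_0(Ω). -/
open ZeroAtInfty Filter Topology

/-- `I` is an ideal of a non-unital commutative ring (as a set). -/
def IsIdeal {A : Type*} [NonUnitalCommRing A] (I : Set A) : Prop :=
  (0 : A) ∈ I ∧ (∀ a ∈ I, ∀ b ∈ I, a + b ∈ I) ∧ (∀ a ∈ I, -a ∈ I) ∧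
    ∀ a ∈ I, ∀ b : A, a * b ∈ I

/-- `I` is a prime ideal of a non-unital commutative ring: a proper ideal such
that `a * b ∈ I` implies `a ∈ I` or `b ∈ I`. -/
def IsPrimeIdeal {A : Type*} [NonUnitalCommRing A] (I : Set A) : Prop :=
  IsIdeal I ∧ I ≠ Set.univ ∧ ∀ a b : A, a * b ∈ I → a ∈ I ∨ b ∈ I

/-- A sequence of sets is pseudo-finite if every element of the union lies in
all but finitely many of the sets. -/
def PseudoFinite {A : Type*} [NonUnitalCommRing A] (P : ℕ → Set A) : Prop :=
  ∀ a : A, (∃ n, a ∈ P n) → {n | a ∉ P n}.Finite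

namespace PrimeUnionAux

variable {Ω : Type*} [TopologicalSpace Ω] [LocallyCompactSpace Ω] [T2Space Ω]

lemma norm_apply_le (f : C₀(Ω, ℂ)) (x : Ω) : ‖f x‖ ≤ ‖f‖ := by
  simpa using f.toBCF.norm_coe_le_norm x

/-- Domination lemma: if `‖f‖ ≤ C ‖g‖²` pointwise, then `f` is a multiple of `g`. -/
lemma domination (g f : C₀(Ω, ℂ)) (C : ℝ)
    (hfg : ∀ x, ‖f x‖ ≤ C * (‖g x‖ * ‖g x‖)) : ∃ h : C₀(Ω, ℂ), f = g * h := by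
  set C' : ℝ := max C 0 with hC'
  have hC0 : (0:ℝ) ≤ C' := le_max_right _ _
  have hf0 : ∀ x, g x = 0 → f x = 0 := by
    intro x hx
    have h1 : ‖f x‖ ≤ 0 := by simpa [hx] using hfg x
    exact norm_le_zero_iff.mp h1
  have hbd : ∀ x, ‖f x / g x‖ ≤ C' * ‖g x‖ := by
    intro x
    by_cases hx : g x = 0
    · simp [hx, mul_nonneg hC0 (norm_nonneg _)]
    · rw [norm_div, div_le_iff₀ (norm_pos_iff.mpr hx)]
      calc ‖f x‖ ≤ C * (‖g x‖ * ‖g x‖) := hfg x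
        _ ≤ C' * (‖g x‖ * ‖g x‖) :=
            mul_le_mul_of_nonneg_right (le_max_left _ _) (by positivity)
        _ = C' * ‖g x‖ * ‖g x‖ := by ring
  have hcont : Continuous fun x => f x / g x := by
    rw [continuous_iff_continuousAt]
    intro x
    by_cases hx : g x = 0
    · have hzero : f x / g x = 0 := by simp [hx]
      rw [ContinuousAt, hzero]
      refine squeeze_zero_norm (fun y => hbd y) ?_
      have h2 : Tendsto (fun y => C' * ‖g y‖) (𝓝 x) (𝓝 (C' * ‖g x‖)) :=
        (continuous_const.mul (map_continuous g).norm).tendsto x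
      simpa [hx] using h2
    · exact ((map_continuous f).continuousAt).div ((map_continuous g).continuousAt) hx
  have hzi : Tendsto (fun x => f x / g x) (cocompact Ω) (𝓝 0) := by
    refine squeeze_zero_norm (fun y => hbd y) ?_
    have h3 : Tendsto (fun y : Ω => ‖g y‖) (cocompact Ω) (𝓝 0) := by
      simpa using (zero_at_infty g).norm
    simpa using h3.const_mul C'
  refine ⟨⟨⟨fun x => f x / g x, hcont⟩, hzi⟩, ?_⟩
  ext x
  by_cases hx : g x = 0
  · simp [hx, hf0 x hx]
  · simp only [ZeroAtInftyContinuousMap.coe_mul, Pi.mul_apply]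
    show f x = g x * (f x / g x)
    field_simp

/-- Every proper prime ideal omits a real-valued function. -/
lemma exists_real_not_mem {P : Set C₀(Ω, ℂ)} (hP : IsPrimeIdeal P) :
    ∃ r : C₀(Ω, ℂ), r ∉ P ∧ ∀ x, (r x).im = 0 := by
  obtain ⟨f, hf⟩ : ∃ f : C₀(Ω, ℂ), f ∉ P := by
    by_contra h
    push_neg at h
    exact hP.2.1 (Set.eq_univ_of_forall h)
  set u : C₀(Ω, ℂ) := (2⁻¹ : ℂ) • (f + star f) with hu
  set v : C₀(Ω, ℂ) := (-(Complex.I) * 2⁻¹) • (f - star f) with hv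
  have hureal : ∀ x, (u x).im = 0 := by
    intro x
    simp [hu, Complex.ext_iff]
  have hvreal : ∀ x, (v x).im = 0 := by
    intro x
    simp [hv, Complex.ext_iff]
  by_cases hu' : u ∈ P
  · by_cases hv' : v ∈ P
    · exfalso
      have hff : f * f = u * u + (u * ((2 * Complex.I) • v) + -(v * v)) := by
        ext x
        simp [hu, hv, Complex.ext_iff]
        constructor <;> ring
      have h1 : u * u ∈ P := hP.1.2.2.2 u hu' u
      have h2 : u * ((2 * Complex.I) • v) ∈ P := hP.1.2.2.2 u hu' _
      have h3 : -(v * v) ∈ P := hP.1.2.2.1 _ (hP.1.2.2.2 v hv' v)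
      have h4 : f * f ∈ P := by
        rw [hff]
        exact hP.1.2.1 _ h1 _ (hP.1.2.1 _ h2 _ h3)
      rcases hP.2.2 f f h4 with h | h <;> exact hf h
    · exact ⟨v, hv', hvreal⟩
  · exact ⟨u, hu', hureal⟩

end PrimeUnionAux

/-- The union of a pseudo-finite sequence of prime ideals in `C₀(Ω)` is a prime
ideal in `C₀(Ω)`. -/
theorem union_pseudoFinite_primes_isPrime {Ω : Type*} [TopologicalSpace Ω]
    [LocallyCompactSpace Ω] [T2Space Ω]
    (P : ℕ → Set C₀(Ω, ℂ)) (hP : ∀ n, IsPrimeIdeal (P n))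
    (hpf : PseudoFinite P) :
    IsPrimeIdeal (⋃ n, P n) := by
  classical
  -- Properness of the union
  have hproper : (⋃ n, P n) ≠ Set.univ := by
    intro hUniv
    choose r hrP hrIm using fun n => PrimeUnionAux.exists_real_not_mem (hP n)
    set c : ℕ → ℝ := fun n => (1/2 : ℝ)^n / (‖r n‖^2 + 1) with hc
    have hcpos : ∀ n, 0 < c n := fun n => by positivity
    set t : ℕ → C₀(Ω, ℂ) := fun n => (c n) • (r n * r n) with ht
    have htn : ∀ n, ‖t n‖ ≤ (1/2 : ℝ)^n := by
      intro n
      have h1 : ‖t n‖ = |c n| * ‖r n * r n‖ := by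
        rw [ht]
        rw [norm_smul (β := C₀(Ω,ℂ)) (c n) (r n * r n)]
        rw [Real.norm_eq_abs]
      have h2 : ‖r n * r n‖ ≤ ‖r n‖ * ‖r n‖ := norm_mul_le _ _
      have h3 : c n * (‖r n‖ * ‖r n‖) ≤ (1/2 : ℝ)^n := by
        have h4 : c n * (‖r n‖^2 + 1) = (1/2 : ℝ)^n := by
          rw [hc]
          field_simp
        nlinarith [hcpos n]
      rw [h1, abs_of_pos (hcpos n)]
      calc c n * ‖r n * r n‖ ≤ c n * (‖r n‖ * ‖r n‖) :=
            mul_le_mul_of_nonneg_left h2 (hcpos n).le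
        _ ≤ (1/2 : ℝ)^n := h3
    have hsum : Summable t := by
      refine Summable.of_norm ?_
      exact Summable.of_nonneg_of_le (fun n => norm_nonneg _) htn summable_geometric_two
    set g : C₀(Ω, ℂ) := ∑' n, t n with hg
    -- pointwise evaluation of the sum
    have heval : ∀ x : Ω, g x = ∑' n, t n x := by
      intro x
      let φ : C₀(Ω, ℂ) →L[ℝ] ℂ :=
        LinearMap.mkContinuous
          { toFun := fun f => f x
            map_add' := fun a b => by simp
            map_smul' := fun m a => by simp }
          1 (fun f => by simpa using PrimeUnionAux.norm_apply_le f x)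
      exact φ.map_tsum hsum
    -- each term is a nonnegative real
    have htx : ∀ x n, t n x = ((c n * ((r n x).re)^2 : ℝ) : ℂ) := by
      intro x n
      have hre : r n x = (((r n x).re : ℝ) : ℂ) := by
        exact Complex.ext rfl (by simp [hrIm n x])
      show (c n) • ((r n * r n) x) = _
      rw [ZeroAtInftyContinuousMap.coe_mul]
      simp only [Pi.mul_apply]
      rw [hre, Complex.real_smul]
      push_cast [Complex.ofReal_re]
      ring
    -- the key lower bound on ‖g x‖
    have hbound : ∀ x n, c n * ((r n x).re)^2 ≤ ‖g x‖ := by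
      intro x n
      set a : ℕ → ℝ := fun m => c m * ((r m x).re)^2 with ha
      have hapos : ∀ m, 0 ≤ a m := fun m => by positivity
      have hale : ∀ m, a m ≤ (1/2 : ℝ)^m := by
        intro m
        have h5 : ‖r m x‖ ≤ ‖r m‖ := PrimeUnionAux.norm_apply_le _ _
        have h7 : |(r m x).re| ≤ ‖r m x‖ := by
          simpa using Complex.abs_re_le_norm (r m x)
        have h6 : ((r m x).re)^2 ≤ ‖r m x‖^2 := by
          nlinarith [abs_nonneg (r m x).re, sq_abs ((r m x).re)]
        have h8 : c m * (‖r m‖^2 + 1) = (1/2 : ℝ)^m := by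
          rw [hc]; field_simp
        have h9 : ((r m x).re)^2 ≤ ‖r m‖^2 := by
          nlinarith [norm_nonneg (r m x), norm_nonneg (r m)]
        calc a m = c m * ((r m x).re)^2 := rfl
          _ ≤ c m * (‖r m‖^2 + 1) := by nlinarith [hcpos m]
          _ = (1/2 : ℝ)^m := h8
      have hsa : Summable a :=
        Summable.of_nonneg_of_le hapos hale summable_geometric_two
      have hgx : g x = ((∑' m, a m : ℝ) : ℂ) := by
        rw [heval x, Complex.ofReal_tsum]
        exact tsum_congr fun m => htx x m
      have h9 : ‖g x‖ = ∑' m, a m := by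
        rw [hgx, Complex.norm_real, Real.norm_eq_abs,
          abs_of_nonneg (tsum_nonneg hapos)]
      rw [h9]
      exact Summable.le_tsum hsa n (fun m _ => hapos m)
    -- now derive a contradiction
    have hgmem : ∃ m, g ∈ P m := by
      have : g ∈ ⋃ n, P n := hUniv ▸ Set.mem_univ g
      simpa using this
    obtain ⟨m, hm⟩ := hgmem
    -- (r m)⁴ is a multiple of g
    have hdom : ∃ h : C₀(Ω, ℂ), (r m * r m) * (r m * r m) = g * h := by
      refine PrimeUnionAux.domination g _ ((c m)⁻¹^2) ?_
      intro x
      have hre : r m x = (((r m x).re : ℝ) : ℂ) := Complex.ext rfl (by simp [hrIm m x])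
      have h10 : ‖((r m * r m) * (r m * r m)) x‖ = ((r m x).re)^2 * ((r m x).re)^2 := by
        simp only [ZeroAtInftyContinuousMap.coe_mul, Pi.mul_apply]
        rw [hre]
        push_cast
        rw [show ((((r m x).re : ℝ) : ℂ) * ((r m x).re : ℝ)) * (((r m x).re : ℝ) * ((r m x).re : ℝ)) = ((((r m x).re^2 * (r m x).re^2 : ℝ)) : ℂ) by push_cast; ring]
        rw [Complex.norm_real, Real.norm_eq_abs, abs_of_nonneg (by positivity)]
        simp
      rw [h10]
      have h11 : ((r m x).re)^2 ≤ (c m)⁻¹ * ‖g x‖ := by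
        have h := hbound x m
        have h' : (c m)⁻¹ * (c m * ((r m x).re)^2) ≤ (c m)⁻¹ * ‖g x‖ :=
          mul_le_mul_of_nonneg_left h (by positivity)
        rwa [← mul_assoc, inv_mul_cancel₀ (ne_of_gt (hcpos m)), one_mul] at h'
      have h12 : (0:ℝ) ≤ (c m)⁻¹ * ‖g x‖ := by positivity
      nlinarith [sq_nonneg ((r m x).re), h11, h12]
    obtain ⟨h, hh⟩ := hdom
    have h13 : (r m * r m) * (r m * r m) ∈ P m := by
      rw [hh]
      exact (hP m).1.2.2.2 g hm h
    have h14 : r m * r m ∈ P m := by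
      rcases (hP m).2.2 _ _ h13 with h' | h' <;> exact h'
    have h15 : r m ∈ P m := by
      rcases (hP m).2.2 _ _ h14 with h' | h' <;> exact h'
    exact hrP m h15
  -- assemble the prime ideal structure on the union
  refine ⟨⟨?_, ?_, ?_, ?_⟩, hproper, ?_⟩
  · exact Set.mem_iUnion.mpr ⟨0, (hP 0).1.1⟩
  · rintro a ha b hb
    obtain ⟨na, hna⟩ := Set.mem_iUnion.mp ha
    obtain ⟨nb, hnb⟩ := Set.mem_iUnion.mp hb
    have hfa : {n | a ∉ P n}.Finite := hpf a ⟨na, hna⟩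
    have hfb : {n | b ∉ P n}.Finite := hpf b ⟨nb, hnb⟩
    have hinf : ({n | a ∉ P n} ∪ {n | b ∉ P n})ᶜ.Infinite :=
      (hfa.union hfb).infinite_compl
    obtain ⟨n, hn⟩ := hinf.nonempty
    simp only [Set.mem_compl_iff, Set.mem_union, Set.mem_setOf_eq, not_or, not_not] at hn
    exact Set.mem_iUnion.mpr ⟨n, (hP n).1.2.1 a hn.1 b hn.2⟩
  · rintro a ha
    obtain ⟨n, hn⟩ := Set.mem_iUnion.mp ha
    exact Set.mem_iUnion.mpr ⟨n, (hP n).1.2.2.1 a hn⟩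
  · rintro a ha b
    obtain ⟨n, hn⟩ := Set.mem_iUnion.mp ha
    exact Set.mem_iUnion.mpr ⟨n, (hP n).1.2.2.2 a hn b⟩
  · intro a b hab
    obtain ⟨n, hn⟩ := Set.mem_iUnion.mp hab
    rcases (hP n).2.2 a b hn with h | h
    · exact Or.inl (Set.mem_iUnion.mpr ⟨n, h⟩)
    · exact Or.inr (Set.mem_iUnion.mpr ⟨n, h⟩)
end

section
/- Let Ω be a locally compact Hausdorff space and let 𝔔 be a compact family of prime ideals in C_0(Ω) (relatively compact and closed under unions of pseudo-finite sequences). Then every nonempty chain in 𝔔 (with respect to inclusion) has a smallest element; i.e., each chain in 𝔔 is well-ordered by inclusion. -/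
open ZeroAtInfty

/-- A family of prime ideals is relatively compact if every sequence in the
family has a pseudo-finite subsequence. -/
def RelativelyCompactFamily {A : Type*} [NonUnitalCommRing A]
    (𝔓 : Set (Set A)) : Prop :=
  (∀ P ∈ 𝔓, IsPrimeIdeal P) ∧
    ∀ P : ℕ → Set A, (∀ n, P n ∈ 𝔓) →
      ∃ φ : ℕ → ℕ, StrictMono φ ∧ PseudoFinite (fun n => P (φ n))

/-- A family of prime ideals is compact if it is relatively compact and
contains the union of each of its pseudo-finite sequences. -/
def CompactFamily {A : Type*} [NonUnitalCommRing A] (𝔔 : Set (Set A)) : Prop :=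
  RelativelyCompactFamily 𝔔 ∧
    ∀ P : ℕ → Set A, (∀ n, P n ∈ 𝔔) → PseudoFinite P → (⋃ n, P n) ∈ 𝔔

/-- Every nonempty chain in a compact family `𝔔` of prime ideals in `C₀(Ω)`
has a smallest element; i.e., each chain in `𝔔` is well-ordered by inclusion. -/
theorem compactFamily_chain_wellOrdered {Ω : Type*} [TopologicalSpace Ω]
    [LocallyCompactSpace Ω] [T2Space Ω]
    (𝔔 : Set (Set C₀(Ω, ℂ))) (h𝔔 : CompactFamily 𝔔)
    (𝒞 : Set (Set C₀(Ω, ℂ))) (h𝒞 : 𝒞 ⊆ 𝔔) (hchain : IsChain (· ⊆ ·) 𝒞)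
    (hne : 𝒞.Nonempty) :
    ∃ Q ∈ 𝒞, ∀ Q' ∈ 𝒞, Q ⊆ Q' := by
  by_contra h
  push_neg at h
  obtain ⟨Q0, hQ0⟩ := hne
  choose f hmem hns using h
  let g : ℕ → {Q : Set C₀(Ω, ℂ) // Q ∈ 𝒞} := fun n =>
    Nat.rec ⟨Q0, hQ0⟩ (fun _ p => ⟨f p.1 p.2, hmem p.1 p.2⟩) n
  have hstep : ∀ n : ℕ, (g (n+1)).1 ⊆ (g n).1 ∧ ¬ (g n).1 ⊆ (g (n+1)).1 := by
    intro n
    have hns' : ¬ (g n).1 ⊆ (g (n+1)).1 := hns (g n).1 (g n).2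
    refine ⟨?_, hns'⟩
    rcases hchain.total (g (n+1)).2 (g n).2 with h1 | h1
    · exact h1
    · exact absurd h1 hns'
  have hmono : ∀ m n : ℕ, n ≤ m → (g m).1 ⊆ (g n).1 := by
    intro m n hle
    induction m with
    | zero => simp_all
    | succ k ih =>
      rcases Nat.lt_or_ge n (k+1) with h1 | h1
      · exact (hstep k).1.trans (ih (Nat.lt_succ_iff.mp h1))
      · have : n = k+1 := le_antisymm hle h1
        subst this; exact subset_rfl
  obtain ⟨φ, hφ, hpf⟩ := h𝔔.1.2 (fun n => (g n).1) (fun n => h𝒞 (g n).2)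
  obtain ⟨a, ha, hna⟩ := Set.not_subset.mp (hstep (φ 1)).2
  have hfin := hpf a ⟨1, ha⟩
  have hsub : Set.Ici (2:ℕ) ⊆ {n | a ∉ (g (φ n)).1} := by
    intro m hm
    have h2 : φ 1 + 1 ≤ φ m := by
      have := hφ (show (1:ℕ) < m from hm)
      omega
    exact fun hmem' => hna (hmono (φ m) (φ 1 + 1) h2 hmem')
  exact (Set.Ici_infinite 2) (hfin.subset hsub)
end

section
/- Let Ω be a locally compact Hausdorff space and 𝔔 a compact family of prime ideals in C_0(Ω). Then for each P ∈ 𝔔 there exists a ∈ C_0(Ω) with a ∉ P but a ∈ Q for all Q ∈ 𝔔 with Q ⊄ P. -/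
open ZeroAtInfty

theorem relCompact_witness {A : Type*} [NonUnitalCommRing A]
    (𝔔 : Set (Set A)) (h𝔔 : RelativelyCompactFamily 𝔔)
    (P : Set A) (hP : P ∈ 𝔔) :
    ∃ a : A, a ∉ P ∧ ∀ Q ∈ 𝔔, ¬ Q ⊆ P → a ∈ Q := by
  obtain ⟨hPid, hPne, hPpr⟩ := h𝔔.1 P hP
  obtain ⟨a₀, ha₀⟩ := Set.ne_univ_iff_exists_notMem P |>.mp hPne
  by_contra hcon
  push_neg at hcon
  -- work on the subtype of elements not in P
  set T := {x : A // x ∉ P} with hT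
  have key : ∀ x : T, ∃ Q : Set A, Q ∈ 𝔔 ∧ x.1 ∉ Q ∧
      ∃ y : T, y.1 ∈ Q ∧ x.1 * y.1 ∉ P := by
    rintro ⟨x, hx⟩
    obtain ⟨Q, hQ𝔔, hQP, hxQ⟩ := hcon x hx
    obtain ⟨b, hbQ, hbP⟩ := Set.not_subset.mp hQP
    refine ⟨Q, hQ𝔔, hxQ, ⟨b, hbP⟩, hbQ, fun hxb => ?_⟩
    rcases hPpr x b hxb with h | h
    · exact hx h
    · exact hbP h
  choose Q hQ𝔔 hxQ y hyQ hxy using key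
  set g : ℕ → T := fun n => Nat.rec ⟨a₀, ha₀⟩ (fun _ x => ⟨x.1 * (y x).1, hxy x⟩) n with hg
  have hsucc : ∀ n, (g (n + 1)).1 = (g n).1 * (y (g n)).1 := fun n => rfl
  -- monotone membership in ideals
  have mono : ∀ m k, m ≤ k → ∀ R : Set A, IsIdeal R → (g m).1 ∈ R → (g k).1 ∈ R := by
    intro m k hmk R hR hm
    induction k, hmk using Nat.le_induction with
    | base => exact hm
    | succ k _ ih => rw [hsucc]; exact hR.2.2.2 _ ih _
  have hmem : ∀ m k, m < k → (g k).1 ∈ Q (g m) := by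
    intro m k hmk
    have h1 : (g (m + 1)).1 ∈ Q (g m) := by
      rw [hsucc, mul_comm]
      exact ((h𝔔.1 _ (hQ𝔔 (g m))).1).2.2.2 _ (hyQ (g m)) _
    exact mono (m + 1) k hmk _ ((h𝔔.1 _ (hQ𝔔 (g m))).1) h1
  obtain ⟨φ, hφ, hpf⟩ := h𝔔.2 (fun n => Q (g n)) (fun n => hQ𝔔 (g n))
  have hfin := hpf (g (φ 1)).1 ⟨0, hmem (φ 0) (φ 1) (hφ Nat.zero_lt_one)⟩
  have hsub : {n : ℕ | 1 ≤ n} ⊆ {n | (g (φ 1)).1 ∉ Q (g (φ n))} := by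
    intro n (hn : 1 ≤ n) hmemn
    exact hxQ (g (φ n))
      (mono (φ 1) (φ n) (hφ.monotone hn) _ ((h𝔔.1 _ (hQ𝔔 (g (φ n)))).1) hmemn)
  exact Set.Ici_infinite (1 : ℕ) (hfin.subset hsub)

/-- For each `P` in a compact family `𝔔` of prime ideals in `C₀(Ω)` there
exists `a ∉ P` with `a ∈ Q` for all `Q ∈ 𝔔` not contained in `P`. -/
theorem compactFamily_witness {Ω : Type*} [TopologicalSpace Ω]
    [LocallyCompactSpace Ω] [T2Space Ω]
    (𝔔 : Set (Set C₀(Ω, ℂ))) (h𝔔 : CompactFamily 𝔔)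
    (P : Set C₀(Ω, ℂ)) (hP : P ∈ 𝔔) :
    ∃ a : C₀(Ω, ℂ), a ∉ P ∧ ∀ Q ∈ 𝔔, ¬ Q ⊆ P → a ∈ Q := by
  exact relCompact_witness 𝔔 h𝔔.1 P hP
end

section
/- Let Ω be a locally compact Hausdorff space and let 𝔔 be a compact family of prime ideals in C_0(Ω) having a unique maximal element Q. Set I = ⋂𝔔. Then for every a ∈ C_0(Ω) \ Q and every b ∈ Q there exists s ∈ Q such that as − b ∈ I. -/
open ZeroAtInfty

/-! ### Auxiliary material

We show that the element `s := b · conj a / max (‖a‖², ‖b‖)` (defined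
pointwise) works simultaneously for every prime ideal `P ∈ 𝔔`.  The key facts
are that prime ideals of `C₀(Ω, ℂ)` are absolutely convex, and that
`(‖b‖ - ‖a‖²)⁺ ∈ P` for every `P ∈ 𝔔` (because the complementary piece
`(‖a‖² - ‖b‖)⁺` would force `a ∈ Q`). -/

section Aux

open Filter Topology

/-- Elementary real inequality used for membership of the remainder. -/
lemma rB3 (r q : ℝ) (hr : 0 ≤ r) : q * r / max (r ^ 2) q ≤ r := by
  rcases eq_or_lt_of_le (le_max_of_le_left (sq_nonneg r) : (0:ℝ) ≤ max (r ^ 2) q) with hM | hM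
  · rw [← hM]; simp [hr]
  · rw [div_le_iff₀ hM]
    nlinarith [le_max_right (r ^ 2) q]

lemma rB1 (r q : ℝ) (hr : 0 ≤ r) (hq : 0 ≤ q) :
    q * r / max (r ^ 2) q ≤ Real.sqrt q := by
  have ht0 : 0 ≤ Real.sqrt q := Real.sqrt_nonneg q
  have ht : Real.sqrt q ^ 2 = q := Real.sq_sqrt hq
  rcases eq_or_lt_of_le (le_max_of_le_left (sq_nonneg r) : (0:ℝ) ≤ max (r ^ 2) q) with hM | hM
  · rw [← hM]; simp [ht0]
  · rw [div_le_iff₀ hM]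
    nlinarith [sq_nonneg (Real.sqrt q - r), le_max_left (r ^ 2) q, le_max_right (r ^ 2) q]

lemma rB2 (r q : ℝ) (hr : 0 ≤ r) (hq : 0 ≤ q) :
    q * |r ^ 2 / max (r ^ 2) q - 1| ≤ max (q - r ^ 2) 0 := by
  rcases le_total q (r ^ 2) with h | h
  · rw [max_eq_left h]
    by_cases hr0 : r ^ 2 = 0
    · have hq0 : q = 0 := le_antisymm (hr0 ▸ h) hq
      simp [hq0]
    · rw [div_self hr0]
      simp
  · rw [max_eq_right h]
    by_cases hq0 : q = 0
    · simp [hq0]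
    · have hqpos : 0 < q := lt_of_le_of_ne hq (Ne.symm hq0)
      have h1 : r ^ 2 / q - 1 ≤ 0 := by
        rw [sub_nonpos, div_le_one hqpos]; exact h
      rw [abs_of_nonpos h1]
      have : q * -(r ^ 2 / q - 1) = q - r ^ 2 := by field_simp; ring
      rw [this]
      exact le_max_left _ _

/-- The denominator used in the explicit divisor. -/
noncomputable abbrev MM (z w : ℂ) : ℝ := max (‖z‖ ^ 2) ‖w‖

/-- The explicit divisor, as a function of a pair of complex numbers. -/
noncomputable def FF : ℂ × ℂ → ℂ :=
  fun p => p.2 * (starRingEnd ℂ) p.1 / ((MM p.1 p.2 : ℝ) : ℂ)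

lemma FF_apply (z w : ℂ) :
    FF (z, w) = w * (starRingEnd ℂ) z / ((MM z w : ℝ) : ℂ) := rfl

lemma normF (z w : ℂ) :
    ‖w * (starRingEnd ℂ) z / ((MM z w : ℝ) : ℂ)‖ = ‖w‖ * ‖z‖ / MM z w := by
  rw [norm_div, norm_mul, RCLike.norm_conj, Complex.norm_real, Real.norm_eq_abs,
    abs_of_nonneg (le_max_of_le_right (norm_nonneg w))]

lemma remEq (z w : ℂ) :
    z * (w * (starRingEnd ℂ) z / ((MM z w : ℝ) : ℂ)) - w
      = w * (((‖z‖ ^ 2 / MM z w - 1 : ℝ)) : ℂ) := by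
  have hzz : z * (starRingEnd ℂ) z = ((‖z‖ ^ 2 : ℝ) : ℂ) := by
    rw [Complex.mul_conj, Complex.normSq_eq_norm_sq]
  have : (((‖z‖ ^ 2 / MM z w - 1 : ℝ)) : ℂ)
      = z * (starRingEnd ℂ) z / ((MM z w : ℝ) : ℂ) - 1 := by
    rw [hzz]; push_cast; ring
  rw [this]; ring

lemma normRem (z w : ℂ) :
    ‖z * (w * (starRingEnd ℂ) z / ((MM z w : ℝ) : ℂ)) - w‖
      = ‖w‖ * |‖z‖ ^ 2 / MM z w - 1| := by
  rw [remEq, norm_mul, Complex.norm_real, Real.norm_eq_abs]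

lemma contF : Continuous FF := by
  rw [continuous_iff_continuousAt]; intro p
  by_cases hp : p = 0
  · subst hp
    have hb : ∀ q : ℂ × ℂ, ‖FF q‖ ≤ ‖q.1‖ := by
      intro q
      rw [FF, normF]
      exact rB3 _ _ (norm_nonneg _)
    have h1 : Filter.Tendsto (fun q : ℂ × ℂ => ‖q.1‖) (nhds 0) (nhds 0) := by
      simpa using (continuous_fst.norm.tendsto (0 : ℂ × ℂ))
    have h2 := squeeze_zero_norm hb h1
    have hF0 : FF 0 = 0 := by simp [FF]
    simpa [ContinuousAt, hF0] using h2
  · have hM : MM p.1 p.2 ≠ 0 := by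
      intro h0
      apply hp
      have h1 : ‖p.1‖ ^ 2 ≤ 0 := h0 ▸ le_max_left _ _
      have h2 : ‖p.2‖ ≤ 0 := h0 ▸ le_max_right _ _
      exact Prod.ext (norm_le_zero_iff.mp (by nlinarith [norm_nonneg p.1]))
        (norm_le_zero_iff.mp h2)
    apply ContinuousAt.div
    · exact (continuous_snd.mul (Complex.continuous_conj.comp continuous_fst)).continuousAt
    · exact (Complex.continuous_ofReal.comp
        (((continuous_fst.norm).pow 2).max continuous_snd.norm)).continuousAt
    · exact Complex.ofReal_ne_zero.mpr hM

variable {Ω : Type*} [TopologicalSpace Ω]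

/-- Composition of a pair of `C₀` functions with a continuous two-variable
function vanishing at the origin. -/
noncomputable def comp2 (F : ℂ × ℂ → ℂ) (hF : Continuous F) (hF0 : F (0,0) = 0)
    (a b : C₀(Ω, ℂ)) : C₀(Ω, ℂ) :=
  ⟨⟨fun x => F (a x, b x), hF.comp ((map_continuous a).prodMk (map_continuous b))⟩, by
    have h0 : F 0 = 0 := hF0
    simpa [Function.comp_def, h0] using (hF.tendsto 0).comp
      ((a.zero_at_infty').prodMk_nhds (b.zero_at_infty'))⟩

@[simp] lemma comp2_apply (F : ℂ × ℂ → ℂ) (hF : Continuous F) (hF0 : F (0,0) = 0)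
    (a b : C₀(Ω, ℂ)) (x : Ω) : comp2 F hF hF0 a b x = F (a x, b x) := rfl

/-- Prime ideals of `C₀(Ω, ℂ)` are absolutely convex. -/
lemma absConvex {P : Set C₀(Ω, ℂ)} (hP : IsPrimeIdeal P) {f g : C₀(Ω, ℂ)}
    (hf : f ∈ P) (hle : ∀ x, ‖g x‖ ≤ ‖f x‖) : g ∈ P := by
  have hbound : ∀ x, ‖g x * g x / f x‖ ≤ ‖g x‖ := by
    intro x
    by_cases h : f x = 0
    · simp [h]
    · rw [norm_div, norm_mul, div_le_iff₀ (norm_pos_iff.mpr h)]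
      nlinarith [hle x, norm_nonneg (g x), norm_nonneg (f x)]
  have hg0 : ∀ x, f x = 0 → g x = 0 := fun x h =>
    norm_le_zero_iff.mp (by simpa [h] using hle x)
  have hcont : Continuous (fun x => g x * g x / f x) := by
    rw [continuous_iff_continuousAt]; intro x
    by_cases h : f x = 0
    · have : Tendsto (fun y => g y * g y / f y) (𝓝 x) (𝓝 0) := by
        apply squeeze_zero_norm hbound
        have := ((map_continuous g).tendsto x).norm
        rw [hg0 x h] at this; simpa using this
      simpa [ContinuousAt, h, hg0 x h] using this
    · exact ((map_continuous g).continuousAt.mul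
        (map_continuous g).continuousAt).div (map_continuous f).continuousAt h
  have hz : Tendsto (fun x => g x * g x / f x) (cocompact Ω) (𝓝 0) :=
    squeeze_zero_norm hbound (by simpa using (g.zero_at_infty').norm)
  set h : C₀(Ω, ℂ) := ⟨⟨_, hcont⟩, hz⟩ with hh
  have key : g * g = f * h := by
    ext x
    show g x * g x = f x * (g x * g x / f x)
    by_cases hfx : f x = 0
    · simp [hg0 x hfx, hfx]
    · field_simp
  rcases hP.2.2 g g (key ▸ hP.1.2.2.2 f hf h) with h' | h' <;> exact h'

/-- The main auxiliary result: divisibility holds simultaneously in every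
member of a family of prime ideals with a common upper bound `Q` avoiding
`a`. -/
lemma divisibility_aux (𝔔 : Set (Set C₀(Ω, ℂ)))
    (hprime : ∀ P ∈ 𝔔, IsPrimeIdeal P)
    (Q : Set C₀(Ω, ℂ)) (hQ : Q ∈ 𝔔) (hmax : ∀ P ∈ 𝔔, P ⊆ Q)
    (a b : C₀(Ω, ℂ)) (ha : a ∉ Q) (hb : b ∈ Q) :
    ∃ s ∈ Q, a * s - b ∈ ⋂₀ 𝔔 := by
  have hQp : IsPrimeIdeal Q := hprime Q hQ
  -- the relevant elements of C₀(Ω, ℂ)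
  set nb : C₀(Ω, ℂ) := comp2 (fun p => ((‖p.2‖ : ℝ) : ℂ))
    (Complex.continuous_ofReal.comp continuous_snd.norm) (by norm_num) a b with hnb
  set sqb : C₀(Ω, ℂ) := comp2 (fun p => ((Real.sqrt ‖p.2‖ : ℝ) : ℂ))
    (Complex.continuous_ofReal.comp (Real.continuous_sqrt.comp continuous_snd.norm))
    (by norm_num) a b with hsqb
  set u : C₀(Ω, ℂ) := comp2 (fun p => ((max (‖p.2‖ - ‖p.1‖ ^ 2) 0 : ℝ) : ℂ))
    (Complex.continuous_ofReal.comp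
      ((continuous_snd.norm.sub ((continuous_fst.norm).pow 2)).max continuous_const))
    (by norm_num) a b with hu
  set v : C₀(Ω, ℂ) := comp2 (fun p => ((max (‖p.1‖ ^ 2 - ‖p.2‖) 0 : ℝ) : ℂ))
    (Complex.continuous_ofReal.comp
      (((continuous_fst.norm.pow 2).sub continuous_snd.norm).max continuous_const))
    (by norm_num) a b with hv
  set ac : C₀(Ω, ℂ) := comp2 (fun p => (starRingEnd ℂ) p.1)
    (Complex.continuous_conj.comp continuous_fst) (by norm_num) a b with hac
  set S : C₀(Ω, ℂ) := comp2 FF contF (by simp [FF]) a b with hS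
  -- |b| ∈ Q
  have hnbQ : nb ∈ Q := by
    apply absConvex hQp hb
    intro x
    rw [hnb]
    simp [Complex.norm_real]
  -- √|b| ∈ Q
  have hsqbQ : sqb ∈ Q := by
    have hmul : sqb * sqb = nb := by
      ext x
      show ((Real.sqrt ‖b x‖ : ℝ) : ℂ) * ((Real.sqrt ‖b x‖ : ℝ) : ℂ) = ((‖b x‖ : ℝ) : ℂ)
      rw [← Complex.ofReal_mul, Real.mul_self_sqrt (norm_nonneg _)]
    rcases hQp.2.2 sqb sqb (by rw [hmul]; exact hnbQ) with h | h <;> exact h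
  -- (|b| - |a|²)⁺ ∈ P for every P ∈ 𝔔
  have huP : ∀ P ∈ 𝔔, u ∈ P := by
    intro P hP
    have hPp : IsPrimeIdeal P := hprime P hP
    have huv : u * v = 0 := by
      ext x
      show ((max (‖b x‖ - ‖a x‖ ^ 2) 0 : ℝ) : ℂ) * ((max (‖a x‖ ^ 2 - ‖b x‖) 0 : ℝ) : ℂ)
        = (0 : C₀(Ω, ℂ)) x
      rcases le_total (‖b x‖) (‖a x‖ ^ 2) with h | h
      · rw [max_eq_right (sub_nonpos.mpr h)]
        simp
      · rw [max_eq_right (sub_nonpos.mpr h)]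
        simp
    rcases hPp.2.2 u v (by rw [huv]; exact hPp.1.1) with h | h
    · exact h
    · exfalso
      apply ha
      have hvQ : v ∈ Q := hmax P hP h
      have hsum : v + nb ∈ Q := hQp.1.2.1 v hvQ nb hnbQ
      have haa : a * ac ∈ Q := by
        apply absConvex hQp hsum
        intro x
        show ‖a x * (starRingEnd ℂ) (a x)‖
          ≤ ‖((max (‖a x‖ ^ 2 - ‖b x‖) 0 : ℝ) : ℂ) + ((‖b x‖ : ℝ) : ℂ)‖
        rw [norm_mul, RCLike.norm_conj, ← Complex.ofReal_add, Complex.norm_real,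
          Real.norm_eq_abs, abs_of_nonneg (by positivity)]
        rcases le_total (‖a x‖ ^ 2) (‖b x‖) with h' | h'
        · rw [max_eq_right (sub_nonpos.mpr h')]
          nlinarith [norm_nonneg (a x)]
        · rw [max_eq_left (sub_nonneg.mpr h')]
          nlinarith [norm_nonneg (a x)]
      rcases hQp.2.2 a ac haa with h' | h'
      · exact h'
      · apply absConvex hQp h'
        intro x
        show ‖a x‖ ≤ ‖(starRingEnd ℂ) (a x)‖
        rw [RCLike.norm_conj]
  -- s ∈ Q
  have hSQ : S ∈ Q := by
    apply absConvex hQp hsqbQ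
    intro x
    show ‖FF (a x, b x)‖ ≤ ‖((Real.sqrt ‖b x‖ : ℝ) : ℂ)‖
    rw [FF_apply, normF, Complex.norm_real, Real.norm_eq_abs,
      abs_of_nonneg (Real.sqrt_nonneg _)]
    exact rB1 _ _ (norm_nonneg _) (norm_nonneg _)
  refine ⟨S, hSQ, Set.mem_sInter.mpr fun P hP => ?_⟩
  apply absConvex (hprime P hP) (huP P hP)
  intro x
  show ‖a x * FF (a x, b x) - b x‖ ≤ ‖((max (‖b x‖ - ‖a x‖ ^ 2) 0 : ℝ) : ℂ)‖
  rw [FF_apply, normRem, Complex.norm_real, Real.norm_eq_abs,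
    abs_of_nonneg (le_max_right (‖b x‖ - ‖a x‖ ^ 2) 0)]
  exact rB2 _ _ (norm_nonneg _) (norm_nonneg _)

end Aux

/-- Let `𝔔` be a compact family of prime ideals in `C₀(Ω)` with a unique
maximal element `Q`, and set `I = ⋂ 𝔔`. Then for every `a ∉ Q` and `b ∈ Q`
there exists `s ∈ Q` with `a * s - b ∈ I`. -/
theorem compactFamily_divisibility {Ω : Type*} [TopologicalSpace Ω]
    [LocallyCompactSpace Ω] [T2Space Ω]
    (𝔔 : Set (Set C₀(Ω, ℂ))) (h𝔔 : CompactFamily 𝔔) (hne : 𝔔.Nonempty)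
    (Q : Set C₀(Ω, ℂ)) (hQ : Q ∈ 𝔔) (hmax : ∀ P ∈ 𝔔, P ⊆ Q)
    (a b : C₀(Ω, ℂ)) (ha : a ∉ Q) (hb : b ∈ Q) :
    ∃ s ∈ Q, a * s - b ∈ ⋂₀ 𝔔 :=
  divisibility_aux 𝔔 h𝔔.1.1 Q hQ hmax a b ha hb
end
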